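/- Let an SLP in Chomsky normal form with n ≥ 1 nonterminals over an alphabet Σ be given by rhs and val as in the context, and let p be a string with |p| ≥ 2. If p is a substring of val(0), then there exist indices i, j, k with rhs(i) = (j, k) such that p is a substring of suffix_p(val(j)) ++ prefix_p(val(k)), where suffix_p(u) is the longest suffix of u that is a prefix of p and prefix_p(u) is the longest prefix of u that is a suffix of p. -/

import Mathlib

/-- `u` occurs in `w` at position `i`. -/
def OccursAt {α : Type*} (u w : List α) (i : ℕ) : Prop :=
  ∃ w₁ w₂ : List α, w = w₁ ++ u ++ w₂ ∧ w₁.length = i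

/-- `d` is a period of `u` (1-based indexing: `u[i] = u[i+d]` for `1 ≤ i ≤ |u| - d`). -/
def IsPeriod {α : Type*} (u : List α) (d : ℕ) : Prop :=
  1 ≤ d ∧ ∀ i : ℕ, 1 ≤ i → i + d ≤ u.length → u[i-1]? = u[i+d-1]?

/-- `s` is the longest suffix of `u` that is a prefix of `p`. -/
def IsLongestSufPre {α : Type*} (p u s : List α) : Prop :=
  s <:+ u ∧ s <+: p ∧ ∀ t : List α, t <:+ u → t <+: p → t.length ≤ s.length

/-- `s` is the longest prefix of `u` that is a suffix of `p`. -/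
def IsLongestPreSuf {α : Type*} (p u s : List α) : Prop :=
  s <+: u ∧ s <:+ p ∧ ∀ t : List α, t <+: u → t <:+ p → t.length ≤ s.length

lemma exists_longestSufPre' {α : Type*} (p u : List α) : ∃ s, IsLongestSufPre p u s := by
  classical
  have hex : ∃ m, u.drop m <+: p := ⟨u.length, by simp⟩
  refine ⟨u.drop (Nat.find hex), List.drop_suffix _ _, Nat.find_spec hex, ?_⟩
  intro t ht hpre
  have hlen : t.length ≤ u.length := ht.length_le
  have heq : t = u.drop (u.length - t.length) := List.suffix_iff_eq_drop.mp ht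
  have h1 : Nat.find hex ≤ u.length - t.length := Nat.find_min' hex (heq ▸ hpre)
  rw [List.length_drop]; omega

lemma exists_longestPreSuf' {α : Type*} (p u : List α) : ∃ q, IsLongestPreSuf p u q := by
  classical
  have hex : ∃ m, u.take (u.length - m) <:+ p := ⟨u.length, by simp⟩
  refine ⟨u.take (u.length - Nat.find hex), List.take_prefix _ _, Nat.find_spec hex, ?_⟩
  intro t ht hsuf
  have hlen : t.length ≤ u.length := ht.length_le
  have heq : t = u.take t.length := List.prefix_iff_eq_take.mp ht
  have h1 : Nat.find hex ≤ u.length - t.length :=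
    Nat.find_min' hex (by rw [Nat.sub_sub_self hlen, ← heq]; exact hsuf)
  rw [List.length_take]; omega

lemma crossing' {α : Type*} {p L R : List α} (h : p <:+: (L ++ R)) :
    p <:+: L ∨ p <:+: R ∨
      ∃ t, 0 < t ∧ t < p.length ∧ p.take t <:+ L ∧ p.drop t <+: R := by
  obtain ⟨w₁, w₂, heq⟩ := h
  set S := L ++ R with hS
  set d := w₁.length with hd
  have hSlen : S.length = L.length + R.length := by simp [hS]
  have hplen : d + p.length ≤ S.length := by
    rw [← heq]; simp; omega
  have hpeq : p = (S.drop d).take p.length := by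
    rw [← heq, hd, List.append_assoc, List.drop_left]
    rw [List.take_append, List.take_of_length_le le_rfl,
      Nat.sub_self, List.take_zero, List.append_nil]
  have hLS : L = S.take L.length := by rw [hS, List.take_left]
  have hRS : R = S.drop L.length := by rw [hS, List.drop_left]
  by_cases h1 : d + p.length ≤ L.length
  · left
    have : p = (L.drop d).take p.length := by
      rw [hLS, List.drop_take, List.take_take, Nat.min_eq_left (by omega), ← hpeq]
    rw [this]
    exact (List.take_prefix _ _).isInfix.trans (List.drop_suffix _ _).isInfix
  · by_cases h2 : L.length ≤ d
    · right; left
      have : p = (R.drop (d - L.length)).take p.length := by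
        rw [hRS, List.drop_drop, Nat.add_sub_cancel' h2, ← hpeq]
      rw [this]
      exact (List.take_prefix _ _).isInfix.trans (List.drop_suffix _ _).isInfix
    · right; right
      refine ⟨L.length - d, by omega, by omega, ?_, ?_⟩
      · have : p.take (L.length - d) = L.drop d := by
          rw [hpeq, List.take_take, Nat.min_eq_left (by omega),
            hLS, List.drop_take]
          congr 1
          rw [List.length_take]
          omega
        rw [this]
        exact List.drop_suffix _ _
      · have : p.drop (L.length - d) = R.take (p.length - (L.length - d)) := by
          rw [hpeq, List.drop_take, List.drop_drop, Nat.add_sub_cancel' (le_of_not_ge h2), ← hRS]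
          congr 1
          rw [List.length_take, List.length_drop]
          omega
        rw [this]
        exact List.take_prefix _ _

theorem stmt_4 {α : Type*} (n : ℕ) (hn : 1 ≤ n)
    (rhs : Fin n → α ⊕ (Fin n × Fin n)) (val : Fin n → List α)
    (hord : ∀ i j k : Fin n, rhs i = Sum.inr (j, k) → i < j ∧ i < k)
    (hterm : ∀ (i : Fin n) (a : α), rhs i = Sum.inl a → val i = [a])
    (hrule : ∀ i j k : Fin n, rhs i = Sum.inr (j, k) → val i = val j ++ val k)
    (p : List α) (hp : 2 ≤ p.length) (hocc : p <:+: val ⟨0, hn⟩) :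
    ∃ i j k : Fin n, rhs i = Sum.inr (j, k) ∧
      ∃ s q : List α, IsLongestSufPre p (val j) s ∧ IsLongestPreSuf p (val k) q ∧
        p <:+: (s ++ q) := by
  classical
  suffices key : ∀ m : ℕ, ∀ i : Fin n, n - i.val ≤ m → p <:+: val i →
      ∃ i j k : Fin n, rhs i = Sum.inr (j, k) ∧
        ∃ s q : List α, IsLongestSufPre p (val j) s ∧ IsLongestPreSuf p (val k) q ∧
          p <:+: (s ++ q) by
    exact key n ⟨0, hn⟩ (by omega) hocc
  intro m
  induction m with
  | zero =>
    intro i h _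
    have := i.isLt
    omega
  | succ m ih =>
    intro i hm hocc
    rcases hr : rhs i with a | ⟨j, k⟩
    · have hv := hterm i a hr
      have hle := hocc.length_le
      rw [hv] at hle
      simp at hle
      omega
    · obtain ⟨hij, hik⟩ := hord i j k hr
      have hij' : (i : ℕ) < j := hij
      have hik' : (i : ℕ) < k := hik
      have hv := hrule i j k hr
      rw [hv] at hocc
      rcases crossing' hocc with hL | hR | ⟨t, ht0, htp, hsL, hpR⟩
      · exact ih j (by omega) hL
      · exact ih k (by omega) hR
      · obtain ⟨s, hs⟩ := exists_longestSufPre' p (val j)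
        obtain ⟨q, hq⟩ := exists_longestPreSuf' p (val k)
        refine ⟨i, j, k, hr, s, q, hs, hq, ?_⟩
        have h1 : (p.take t).length ≤ s.length := hs.2.2 _ hsL (List.take_prefix _ _)
        have h2 : (p.drop t).length ≤ q.length := hq.2.2 _ hpR (List.drop_suffix _ _)
        obtain ⟨s', hs'⟩ := List.suffix_of_suffix_length_le hsL hs.1 h1
        obtain ⟨q', hq'⟩ := List.prefix_of_prefix_length_le hpR hq.1 h2
        refine ⟨s', q', ?_⟩
        rw [← hs', ← hq']
        conv_lhs => rw [← List.take_append_drop t p]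
        simp only [List.append_assoc, List.append_cancel_left_eq]
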